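/- If ℱ is the filter of cofinite subsets of ℕ, then the topological semilattice ℕ_{ℱ,min} × E₂ is compact, and hence every closed subsemilattice of it is 𝓐𝓗-complete (continuous homomorphic images of compact semilattices into Hausdorff topological semilattices are closed). -/

import Mathlib

open Topology Set

/-- A filter is free if the intersection of all its members is empty. -/
def FreeF (F : Filter ℕ) : Prop := ⋂₀ F.sets = ∅

/-- The topology on ℕ_ℱ = ℕ ∪ {ℱ} (modelled as `Option ℕ`, with `none` the point ℱ):
all points of ℕ are isolated, and the sets F ∪ {ℱ}, F ∈ ℱ, form a neighbourhood base at ℱ. -/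
def nfTop (F : Filter ℕ) : TopologicalSpace (Option ℕ) where
  IsOpen U := none ∈ U → {n : ℕ | some n ∈ U} ∈ F
  isOpen_univ := fun _ => by simp
  isOpen_inter := fun U V hU hV h => Filter.inter_mem (hU h.1) (hV h.2)
  isOpen_sUnion := fun S hS h => by
    obtain ⟨U, hUS, hnU⟩ := h
    exact Filter.mem_of_superset (hS U hUS hnU) fun n hn => ⟨U, hUS, hn⟩

/-- min on ℕ extended to ℕ_ℱ by min(n,ℱ) = n, min(ℱ,ℱ) = ℱ. -/
def minOp : Option ℕ → Option ℕ → Option ℕ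
  | none, y => y
  | some a, none => some a
  | some a, some b => some (min a b)

/-- max on ℕ extended to ℕ_ℱ by max(n,ℱ) = ℱ = max(ℱ,ℱ). -/
def maxOp : Option ℕ → Option ℕ → Option ℕ
  | none, _ => none
  | _, none => none
  | some a, some b => some (max a b)

/-- `X` with operation `op` is a (Hausdorff) topological semilattice. -/
structure IsTopSemilattice (X : Type*) [TopologicalSpace X] (op : X → X → X) : Prop where
  t2 : T2Space X
  comm : ∀ a b, op a b = op b a
  idem : ∀ a, op a a = a
  assoc : ∀ a b c, op (op a b) c = op a (op b c)
  cont : Continuous fun p : X × X => op p.1 p.2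

/-- 𝓗-completeness: the image under any topological embedding which is a semilattice
homomorphism into a Hausdorff topological semilattice is closed. -/
def HComplete (X : Type*) [TopologicalSpace X] (op : X → X → X) : Prop :=
  ∀ (Y : Type*) [TopologicalSpace Y] (opY : Y → Y → Y), IsTopSemilattice Y opY →
    ∀ f : X → Y, Topology.IsEmbedding f →
      (∀ a b, f (op a b) = opY (f a) (f b)) → IsClosed (Set.range f)

/-- 𝓐𝓗-completeness: the image under any continuous semilattice homomorphism
into a Hausdorff topological semilattice is closed. -/
def AHComplete (X : Type*) [TopologicalSpace X] (op : X → X → X) : Prop :=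
  ∀ (Y : Type*) [TopologicalSpace Y] (opY : Y → Y → Y), IsTopSemilattice Y opY →
    ∀ f : X → Y, Continuous f →
      (∀ a b, f (op a b) = opY (f a) (f b)) → IsClosed (Set.range f)

/-- The product topology on ℕ_{ℱ,min} × E₂ (E₂ = {0,1} discrete, modelled as `Bool`). -/
def prodTopB (F : Filter ℕ) : TopologicalSpace (Option ℕ × Bool) :=
  @instTopologicalSpaceProd _ _ (nfTop F) inferInstance

/-- The coordinatewise semilattice operation on ℕ_{ℱ,min} × E₂ (min on both coordinates). -/
def pOpB (p q : Option ℕ × Bool) : Option ℕ × Bool := (minOp p.1 q.1, p.2 && q.2)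

/-- The subset E = (ℕ_{ℱ,min} × {0}) ∪ ((ℕ \ F) × {1}). -/
def EsetB (Fs : Set ℕ) : Set (Option ℕ × Bool) :=
  (Set.univ ×ˢ {false}) ∪ ((some '' Fsᶜ) ×ˢ {true})

/-- The ideal I = ℕ_{ℱ,min} × {0}. -/
def IsetB : Set (Option ℕ × Bool) := Set.univ ×ˢ {false}

/-- if ℱ is the filter of cofinite subsets of ℕ, then ℕ_{ℱ,min} × E₂ is
compact, and every closed subsemilattice of it is 𝓐𝓗-complete. -/
theorem cofinite_prod_compact_and_AHComplete :
    @CompactSpace (Option ℕ × Bool) (prodTopB Filter.cofinite) ∧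
      ∀ E : Set (Option ℕ × Bool), @IsClosed _ (prodTopB Filter.cofinite) E →
        ∀ hsub : ∀ p ∈ E, ∀ q ∈ E, pOpB p q ∈ E,
          @AHComplete E (@instTopologicalSpaceSubtype _ _ (prodTopB Filter.cofinite))
            (fun a b => ⟨pOpB a.1 b.1, hsub a.1 a.2 b.1 b.2⟩) := by
  letI : TopologicalSpace (Option ℕ) := nfTop Filter.cofinite
  have hcN : CompactSpace (Option ℕ) := by
    constructor
    rw [isCompact_iff_finite_subcover]
    intro ι U hUo hUcov
    obtain ⟨i0, hi0⟩ := Set.mem_iUnion.mp (hUcov (Set.mem_univ none))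
    have hfin : {n : ℕ | some n ∈ U i0}ᶜ.Finite := by
      have := hUo i0 hi0
      rwa [Filter.mem_cofinite] at this
    classical
    set g : ℕ → ι := fun n => (Set.mem_iUnion.mp (hUcov (Set.mem_univ (some n)))).choose
    have hg : ∀ n, some n ∈ U (g n) := fun n =>
      (Set.mem_iUnion.mp (hUcov (Set.mem_univ (some n)))).choose_spec
    refine ⟨insert i0 (hfin.toFinset.image g), fun x _ => ?_⟩
    match x with
    | none => exact Set.mem_biUnion (Finset.mem_insert_self _ _) hi0
    | some n =>
      by_cases h : some n ∈ U i0
      · exact Set.mem_biUnion (Finset.mem_insert_self _ _) h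
      · refine Set.mem_biUnion ?_ (hg n)
        exact Finset.mem_insert_of_mem
          (Finset.mem_image_of_mem g (hfin.mem_toFinset.mpr h))
  haveI hcP : @CompactSpace (Option ℕ × Bool) (prodTopB Filter.cofinite) := by
    show CompactSpace (Option ℕ × Bool)
    infer_instance
  refine ⟨hcP, fun E hE hsub => ?_⟩
  intro Y _ opY hY f hf hhom
  haveI := hY.t2
  haveI : @CompactSpace E (@instTopologicalSpaceSubtype _ _ (prodTopB Filter.cofinite)) := isCompact_iff_compactSpace.mp (hE.isCompact)
  exact (isCompact_range hf).isClosed
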